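/- arXiv:2402.03942 — 3 statements merged into one kernel-verified Lean document; each statement's English description precedes it below -/
import Mathlib

section
/- Let β ∈ ℝ^{n+1} be nonzero with Δ = β/‖β‖₂, define ψ(z) = ⟨β, z⟩² and d(z',z) = ‖z'-z‖₂‖z'+z‖₂. Then for every z ∈ ℝ^{n+1}, every δ > 0, and every ε ∈ (0, ‖β‖₂²), there exists z̃ = z + kΔ for some k > 0 such that d(z̃, z) ≥ δ and ψ(z̃) - ψ(z) ≥ (‖β‖₂² - ε)·d(z̃, z). -/
set_option maxHeartbeats 1000000


/-- The weak Lipschitz constant `‖β‖₂²` of the squared linear loss is approximately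
attained along the direction `Δ = β/‖β‖₂` at points with arbitrarily large cost. -/
theorem squared_loss_tightness (n : ℕ) (β : EuclideanSpace ℝ (Fin (n + 1))) (hβ : β ≠ 0)
    (Δ : EuclideanSpace ℝ (Fin (n + 1))) (hΔ : Δ = ‖β‖⁻¹ • β)
    (ψ : EuclideanSpace ℝ (Fin (n + 1)) → ℝ)
    (hψ : ∀ z, ψ z = (inner ℝ β z : ℝ) ^ 2)
    (d : EuclideanSpace ℝ (Fin (n + 1)) → EuclideanSpace ℝ (Fin (n + 1)) → ℝ)
    (hd : ∀ z' z, d z' z = ‖z' - z‖ * ‖z' + z‖) :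
    ∀ z : EuclideanSpace ℝ (Fin (n + 1)), ∀ δ ε : ℝ, 0 < δ → 0 < ε → ε < ‖β‖ ^ 2 →
      ∃ k : ℝ, 0 < k ∧ δ ≤ d (z + k • Δ) z ∧
        (‖β‖ ^ 2 - ε) * d (z + k • Δ) z ≤ ψ (z + k • Δ) - ψ z := by
  intro z δ ε hδ hε hεb
  have hb : (0:ℝ) < ‖β‖ := norm_pos_iff.mpr hβ
  set b := ‖β‖ with hbdef
  set k : ℝ := 2*‖z‖*(1 + (2*b^2)/ε) + δ + 1 with hk
  have hz : (0:ℝ) ≤ ‖z‖ := norm_nonneg _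
  have hkpos : 0 < k := by positivity
  have hΔnorm : ‖Δ‖ = 1 := by
    rw [hΔ, norm_smul, Real.norm_eq_abs, abs_inv, abs_of_pos hb, inv_mul_cancel₀ hb.ne']
  have hdval : d (z + k • Δ) z = k * ‖z + k • Δ + z‖ := by
    rw [hd]
    congr 1
    simp [norm_smul, hΔnorm, abs_of_pos hkpos]
  have hNub : ‖z + k • Δ + z‖ ≤ 2*‖z‖ + k := by
    calc ‖z + k • Δ + z‖ ≤ ‖z + k • Δ‖ + ‖z‖ := norm_add_le _ _
      _ ≤ ‖z‖ + ‖k • Δ‖ + ‖z‖ := by linarith [norm_add_le z (k • Δ)]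
      _ = 2*‖z‖ + k := by rw [norm_smul, Real.norm_eq_abs, abs_of_pos hkpos, hΔnorm]; ring
  have hNlb : k - 2*‖z‖ ≤ ‖z + k • Δ + z‖ := by
    have h1 : ‖k • Δ‖ - ‖z + z‖ ≤ ‖(z + z) + k • Δ‖ := by
      have h := norm_sub_le ((z + z) + k • Δ) (z + z)
      have he : ((z + z) + k • Δ) - (z + z) = k • Δ := by abel
      rw [he] at h
      linarith
    have h2 : ((z + z) + k • Δ) = z + k • Δ + z := by abel
    have h3 : ‖z + z‖ ≤ 2*‖z‖ := by
      calc ‖z + z‖ ≤ ‖z‖ + ‖z‖ := norm_add_le _ _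
        _ = 2*‖z‖ := by ring
    rw [norm_smul, Real.norm_eq_abs, abs_of_pos hkpos, hΔnorm, h2] at h1
    linarith
  have hinnerΔ : (inner ℝ β Δ : ℝ) = b := by
    rw [hΔ, real_inner_smul_right, real_inner_self_eq_norm_sq]
    field_simp
    rw [← hbdef]
  have hc : |(inner ℝ β z : ℝ)| ≤ b * ‖z‖ := abs_real_inner_le_norm β z
  have hclb : -(b * ‖z‖) ≤ (inner ℝ β z : ℝ) := neg_le_of_abs_le hc
  have hψdiff : ψ (z + k • Δ) - ψ z = 2 * (inner ℝ β z : ℝ) * k * b + k^2 * b^2 := by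
    rw [hψ, hψ, inner_add_right, real_inner_smul_right, hinnerΔ]
    ring
  have hk' : k = 2*‖z‖ + 2*‖z‖*((2*b^2)/ε) + δ + 1 := by rw [hk]; ring
  have ht0 : (0:ℝ) ≤ 2*‖z‖*((2*b^2)/ε) := by positivity
  have hkε : 2*‖z‖*(2*b^2) ≤ ε * k := by
    have h1 : ε * (2*‖z‖*((2*b^2)/ε)) = 2*‖z‖*(2*b^2) := by field_simp
    rw [hk']
    nlinarith [mul_nonneg hε.le hz, mul_pos hε hδ]
  refine ⟨k, hkpos, ?_, ?_⟩
  · rw [hdval]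
    have hk2 : δ + 1 ≤ k - 2*‖z‖ := by rw [hk']; linarith
    have hk1 : δ + 1 ≤ k := by linarith
    nlinarith
  · rw [hdval, hψdiff]
    set N := ‖z + k • Δ + z‖ with hN
    have hNnn : 0 ≤ N := norm_nonneg _
    have h1 : (b^2-ε) * N ≤ (b^2-ε) * (2*‖z‖+k) :=
      mul_le_mul_of_nonneg_left hNub (by linarith)
    nlinarith [mul_le_mul_of_nonneg_left h1 hkpos.le,
      mul_le_mul_of_nonneg_left hkε hkpos.le,
      mul_le_mul_of_nonneg_left hclb (by positivity : (0:ℝ) ≤ 2*k*b),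
      mul_nonneg (mul_nonneg hε.le hz) hkpos.le]
end

section
/- Let β ∈ (0,1), ẑ ∈ (0, 1/2], and h(t) = t·log t + (1-t)·log(1-t) on (0,1). Set L = -β·log(β·ẑ) - (1/ẑ - β)·log(1 - β·ẑ). Then for every z ∈ (0,1), |h(βz) - h(βẑ)| ≤ L·|z - ẑ|. -/
noncomputable def bceH : ℝ → ℝ := fun t => t * Real.log t + (1 - t) * Real.log (1 - t)

lemma bce_H_convex : ConvexOn ℝ (Set.Icc (0:ℝ) 1) bceH := by
  have h1 : ConvexOn ℝ (Set.Icc (0:ℝ) 1) (fun t : ℝ => t * Real.log t) :=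
    Real.convexOn_mul_log.subset (fun x hx => hx.1) (convex_Icc 0 1)
  have h2 : ConvexOn ℝ (Set.Icc (0:ℝ) 1) (fun t : ℝ => (1 - t) * Real.log (1 - t)) := by
    refine ⟨convex_Icc 0 1, ?_⟩
    intro x hx y hy a b ha hb hab
    have key := Real.convexOn_mul_log.2 (x := 1 - x) (y := 1 - y)
      (by simpa using hx.2) (by simpa using hy.2) ha hb hab
    have e : a • (1 - x) + b • (1 - y) = 1 - (a • x + b • y) := by
      simp only [smul_eq_mul]; linear_combination hab
    rw [e] at key
    simpa using key
  exact h1.add h2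

lemma bce_three_point {s : Set ℝ} {f : ℝ → ℝ} (hf : ConvexOn ℝ s f) {x y w : ℝ}
    (hx : x ∈ s) (hw : w ∈ s) (hxy : x ≤ y) (hyw : y ≤ w) (hxw : x < w) :
    (w - x) * f y ≤ (w - y) * f x + (y - x) * f w := by
  have hd : 0 < w - x := by linarith
  have ha : (0:ℝ) ≤ (w-y)/(w-x) := div_nonneg (by linarith) hd.le
  have hb : (0:ℝ) ≤ (y-x)/(w-x) := div_nonneg (by linarith) hd.le
  have hab : (w-y)/(w-x) + (y-x)/(w-x) = 1 := by
    rw [← add_div, div_eq_one_iff_eq hd.ne']; ring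
  have key := hf.2 hx hw ha hb hab
  have e : ((w-y)/(w-x)) • x + ((y-x)/(w-x)) • w = y := by
    rw [smul_eq_mul, smul_eq_mul]; field_simp; ring
  rw [e, smul_eq_mul, smul_eq_mul, div_mul_eq_mul_div, div_mul_eq_mul_div,
    ← add_div, le_div_iff₀ hd] at key
  linarith

lemma bce_H_nonpos {t : ℝ} (h0 : 0 ≤ t) (h1 : t ≤ 1) : bceH t ≤ 0 := by
  have l1 := Real.log_nonpos h0 h1
  have l2 := Real.log_nonpos (by linarith) (by linarith : 1 - t ≤ 1)
  have t1 : t * Real.log t ≤ 0 := mul_nonpos_iff.mpr (Or.inl ⟨h0, l1⟩)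
  have t2 : (1 - t) * Real.log (1 - t) ≤ 0 := mul_nonpos_iff.mpr (Or.inl ⟨by linarith, l2⟩)
  unfold bceH; linarith

lemma bce_H_zero : bceH 0 = 0 := by simp [bceH]

lemma bce_H_symm (t : ℝ) : bceH (1 - t) = bceH t := by
  unfold bceH; rw [show (1:ℝ) - (1 - t) = t by ring]; ring

/-- Weak Lipschitz property of the binary cross-entropy loss `z ↦ h(βz)` at the
single point `ẑ ∈ (0, 1/2]`, with constant `L = -β log(βẑ) - (1/ẑ - β) log(1-βẑ)`. -/
theorem binary_cross_entropy_weak_lipschitz (β zhat : ℝ)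
    (hβ : β ∈ Set.Ioo (0:ℝ) 1) (hz : zhat ∈ Set.Ioc (0:ℝ) (1/2))
    (h : ℝ → ℝ)
    (hdef : ∀ t, h t = t * Real.log t + (1 - t) * Real.log (1 - t))
    (L : ℝ)
    (hL : L = -β * Real.log (β * zhat) - (1 / zhat - β) * Real.log (1 - β * zhat)) :
    ∀ z ∈ Set.Ioo (0:ℝ) 1, |h (β * z) - h (β * zhat)| ≤ L * |z - zhat| := by
  obtain ⟨hβ0, hβ1⟩ := hβ
  obtain ⟨hz0, hz2⟩ := hz
  intro z hzz
  obtain ⟨hz0', hz1'⟩ := hzz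
  have hdef2 : ∀ t, h t = bceH t := fun t => hdef t
  rw [hdef2, hdef2]
  have h1β : (1:ℝ) < 1/β := by rw [lt_div_iff₀ hβ0]; linarith
  have htz0 : 0 < β * zhat := by positivity
  have htz1 : β * zhat < 1/2 := by nlinarith
  have hA : bceH (β * zhat) ≤ 0 := bce_H_nonpos htz0.le (by linarith)
  have hF1 : bceH (β * 1) ≤ 0 := by
    rw [mul_one]; exact bce_H_nonpos hβ0.le hβ1.le
  have hLz : L * zhat = -bceH (β * zhat) := by
    rw [hL]; unfold bceH; field_simp; ring
  -- convexity of z ↦ bceH (β z) on [0, 1/β]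
  have hFconv : ConvexOn ℝ (Set.Icc (0:ℝ) (1/β)) (fun z => bceH (β * z)) := by
    refine ⟨convex_Icc _ _, ?_⟩
    intro x hx y hy a b ha hb hab
    have hx1 : β * x ≤ 1 := by
      have := (le_div_iff₀ hβ0).mp hx.2; linarith
    have hy1 : β * y ≤ 1 := by
      have := (le_div_iff₀ hβ0).mp hy.2; linarith
    have key := bce_H_convex.2 (x := β*x) (y := β*y)
      ⟨mul_nonneg hβ0.le hx.1, hx1⟩ ⟨mul_nonneg hβ0.le hy.1, hy1⟩ ha hb hab
    have e : a • (β*x) + b • (β*y) = β * (a • x + b • y) := by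
      simp only [smul_eq_mul]; ring
    rw [e] at key
    simpa using key
  -- memberships
  have m0 : (0:ℝ) ∈ Set.Icc (0:ℝ) (1/β) := ⟨le_refl 0, by linarith⟩
  have mz : z ∈ Set.Icc (0:ℝ) (1/β) := ⟨hz0'.le, by linarith⟩
  have mzh : zhat ∈ Set.Icc (0:ℝ) (1/β) := ⟨hz0.le, by linarith⟩
  have mw : 1/β - zhat ∈ Set.Icc (0:ℝ) (1/β) := ⟨by linarith, by linarith⟩
  have m1 : (1:ℝ) ∈ Set.Icc (0:ℝ) (1/β) := ⟨by norm_num, h1β.le⟩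
  have hFw : bceH (β * (1/β - zhat)) = bceH (β * zhat) := by
    rw [show β * (1/β - zhat) = 1 - β * zhat by field_simp]
    exact bce_H_symm _
  have hF0 : bceH (β * 0) = 0 := by rw [mul_zero]; exact bce_H_zero
  -- main two-sided bound (L-free)
  have key : zhat * |bceH (β * z) - bceH (β * zhat)| ≤ (-bceH (β * zhat)) * |z - zhat| := by
    rcases le_total z zhat with hle | hge
    · -- z ≤ zhat
      have k1 := bce_three_point hFconv m0 mzh hz0'.le hle hz0
      -- k1 : (zhat - 0) * F z ≤ (zhat - z) * F 0 + (z - 0) * F zhat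
      rw [hF0] at k1
      have k2 := bce_three_point hFconv mz mw hle (by linarith) (by linarith)
      rw [hFw] at k2
      -- k2 gives F z ≥ F zhat since (1/β - zhat) - zhat > 0
      have hFzA : bceH (β * zhat) ≤ bceH (β * z) := by nlinarith
      rw [abs_of_nonneg (by linarith), abs_of_nonpos (by linarith : z - zhat ≤ 0)]
      nlinarith
    · -- zhat ≤ z
      have k3 := bce_three_point hFconv m0 mz hz0.le hge hz0'
      rw [hF0] at k3
      -- k3 : z * F zhat ≤ (z - zhat)*0 + zhat * F z
      have k4 := bce_three_point hFconv mzh m1 hge hz1'.le (by linarith)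
      -- k4 : (1 - zhat) * F z ≤ (1 - z) * F zhat + (z - zhat) * F 1
      rw [abs_of_nonneg (by linarith : (0:ℝ) ≤ z - zhat)]
      rw [show zhat * |bceH (β * z) - bceH (β * zhat)| =
        |zhat * (bceH (β * z) - bceH (β * zhat))| by
          rw [abs_mul, abs_of_nonneg hz0.le]]
      rw [abs_le]
      constructor
      · nlinarith
      · nlinarith [mul_le_mul_of_nonneg_left k4 hz0.le,
          mul_nonneg (mul_nonneg hz0.le (by linarith : (0:ℝ) ≤ z - zhat))
            (neg_nonneg.2 hF1),
          mul_nonneg (mul_nonneg (neg_nonneg.2 hA) (by linarith : (0:ℝ) ≤ z - zhat))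
            (by linarith : (0:ℝ) ≤ 1 - 2*zhat)]
  apply le_of_mul_le_mul_left _ hz0
  calc zhat * |bceH (β * z) - bceH (β * zhat)| ≤ (-bceH (β * zhat)) * |z - zhat| := key
    _ = zhat * (L * |z - zhat|) := by rw [← hLz]; ring
end

section
/- Let h(t) = max{0, min{1, (t+1)/2}} be the hard sigmoid, β ∈ ℝⁿ with dual norm ‖β‖* = θ > 0, and α ∈ ℝⁿ with ‖α‖ = 1 and ⟨α, β⟩ = θ. Let z̄ = -(3/θ)·α and ψ(z) = h(⟨β, z⟩). Then for all z ∈ ℝⁿ, |ψ(z) - ψ(z̄)| ≤ (θ/4)·‖z - z̄‖. -/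
/-- Weak Lipschitz property of the hard sigmoid loss `ψ(z) = h(⟨β,z⟩)` at the point
`z̄ = -(3/θ)α`, with constant `θ/4` (θ being the dual norm of β). -/
theorem hard_sigmoid_weak_lipschitz_at_zbar (n : ℕ)
    (N : (Fin n → ℝ) → ℝ)
    (hN_add : ∀ x y, N (x + y) ≤ N x + N y)
    (hN_smul : ∀ (a : ℝ) (x), N (a • x) = |a| * N x)
    (hN_zero : ∀ x, N x = 0 ↔ x = 0)
    (β α : Fin n → ℝ) (θ : ℝ) (hθ : 0 < θ)
    (hdual : IsLUB {s | ∃ y, N y = 1 ∧ s = ∑ i, β i * y i} θ)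
    (hα : N α = 1) (hαβ : ∑ i, α i * β i = θ)
    (zbar : Fin n → ℝ) (hzbar : zbar = (-(3 / θ)) • α)
    (h : ℝ → ℝ) (hdef : ∀ t, h t = max 0 (min 1 ((t + 1) / 2)))
    (ψ : (Fin n → ℝ) → ℝ) (hψ : ∀ z, ψ z = h (∑ i, β i * z i)) :
    ∀ z, |ψ z - ψ zbar| ≤ θ / 4 * N (z - zbar) := by
  -- nonnegativity of N
  have hN0 : N 0 = 0 := (hN_zero 0).mpr rfl
  have hNneg : ∀ x, N (-x) = N x := by
    intro x
    have : N ((-1 : ℝ) • x) = |(-1 : ℝ)| * N x := hN_smul (-1) x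
    simpa using this
  have hNnn : ∀ x, 0 ≤ N x := by
    intro x
    have h1 := hN_add x (-x)
    have h2 : N (x + -x) = 0 := by simpa using hN0
    have := hNneg x
    linarith [h1, h2.symm ▸ h1]
  -- dual norm bound
  have hbound : ∀ w, ∑ i, β i * w i ≤ θ * N w := by
    intro w
    by_cases hw : w = 0
    · subst hw
      simp [hN0]
    · have hc : 0 < N w := lt_of_le_of_ne (hNnn w) (fun e => hw ((hN_zero w).mp e.symm))
      set c := N w with hcdef
      have hy : N (c⁻¹ • w) = 1 := by
        rw [hN_smul]
        rw [abs_of_pos (inv_pos.mpr hc)]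
        field_simp
        exact hcdef.symm
      have hmem : (∑ i, β i * (c⁻¹ • w) i) ∈ {s | ∃ y, N y = 1 ∧ s = ∑ i, β i * y i} :=
        ⟨c⁻¹ • w, hy, rfl⟩
      have hle : (∑ i, β i * (c⁻¹ • w) i) ≤ θ := hdual.1 hmem
      have hsum : (∑ i, β i * (c⁻¹ • w) i) = c⁻¹ * ∑ i, β i * w i := by
        rw [Finset.mul_sum]
        apply Finset.sum_congr rfl
        intro i _
        simp [Pi.smul_apply, smul_eq_mul]; ring
      rw [hsum] at hle
      calc ∑ i, β i * w i = c * (c⁻¹ * ∑ i, β i * w i) := by field_simp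
        _ ≤ c * θ := by apply mul_le_mul_of_nonneg_left hle (le_of_lt hc)
        _ = θ * c := mul_comm _ _
  -- ⟨β, zbar⟩ = -3
  have hsz : (∑ i, β i * zbar i) = -3 := by
    subst hzbar
    have : (∑ i, β i * ((-(3 / θ)) • α) i) = (-(3 / θ)) * ∑ i, α i * β i := by
      rw [Finset.mul_sum]
      apply Finset.sum_congr rfl
      intro i _
      simp [Pi.smul_apply, smul_eq_mul]; ring
    rw [this, hαβ]
    field_simp
  have hψzbar : ψ zbar = 0 := by
    rw [hψ, hsz, hdef]
    norm_num
  intro z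
  rw [hψzbar, sub_zero, hψ, hdef]
  set s := ∑ i, β i * z i with hs
  have hkey : s + 3 ≤ θ * N (z - zbar) := by
    have : (∑ i, β i * (z - zbar) i) = s - ∑ i, β i * zbar i := by
      rw [← Finset.sum_sub_distrib]
      apply Finset.sum_congr rfl
      intro i _
      simp [Pi.sub_apply]; ring
    have hb := hbound (z - zbar)
    rw [this, hsz] at hb
    linarith
  set c := θ * N (z - zbar) with hc
  have hcnn : 0 ≤ c := mul_nonneg (le_of_lt hθ) (hNnn _)
  have hgoal : max 0 (min 1 ((s + 1) / 2)) ≤ c / 4 := by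
    apply max_le (by linarith)
    rcases le_total c 4 with h4 | h4
    · calc min 1 ((s + 1) / 2) ≤ (s + 1) / 2 := min_le_right _ _
        _ ≤ c / 4 := by linarith
    · calc min 1 ((s + 1) / 2) ≤ 1 := min_le_left _ _
        _ ≤ c / 4 := by linarith
  have habs : |max 0 (min 1 ((s + 1) / 2))| = max 0 (min 1 ((s + 1) / 2)) :=
    abs_of_nonneg (le_max_left _ _)
  rw [habs]
  calc max 0 (min 1 ((s + 1) / 2)) ≤ c / 4 := hgoal
    _ = θ / 4 * N (z - zbar) := by rw [hc]; ring
end
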